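/- For any A ∈ M_n(ℂ), every point of F_N(A) is the image under h(v) = (v_1 + iv_2)/√v_3 of a point of the topological boundary of DW(A) with positive third coordinate. -/

import Mathlib

open Matrix

noncomputable def fN {n : ℕ} (A : Matrix (Fin n) (Fin n) ℂ)
    (x : EuclideanSpace ℂ (Fin n)) : ℂ :=
  (inner ℂ x (Matrix.toEuclideanLin A x) : ℂ) /
    ((‖x‖ * ‖Matrix.toEuclideanLin A x‖ : ℝ) : ℂ)

noncomputable def FN {n : ℕ} (A : Matrix (Fin n) (Fin n) ℂ) : Set ℂ :=
  {z | ∃ x : EuclideanSpace ℂ (Fin n), Matrix.toEuclideanLin A x ≠ 0 ∧ z = fN A x}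

noncomputable def DW {n : ℕ} (A : Matrix (Fin n) (Fin n) ℂ) : Set (ℝ × ℝ × ℝ) :=
  {v | ∃ x : EuclideanSpace ℂ (Fin n), ‖x‖ = 1 ∧
    v = ((inner ℂ x (Matrix.toEuclideanLin A x) : ℂ).re,
         (inner ℂ x (Matrix.toEuclideanLin A x) : ℂ).im,
         ‖Matrix.toEuclideanLin A x‖ ^ 2)}

noncomputable def hmap (v : ℝ × ℝ × ℝ) : ℂ :=
  ((v.1 : ℂ) + (v.2.1 : ℂ) * Complex.I) / ((Real.sqrt v.2.2 : ℝ) : ℂ)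

lemma DW_compact {n : ℕ} (A : Matrix (Fin n) (Fin n) ℂ) : IsCompact (DW A) := by
  have hT : Continuous (Matrix.toEuclideanLin A) :=
    LinearMap.continuous_of_finiteDimensional _
  have hin : Continuous fun x : EuclideanSpace ℂ (Fin n) =>
      (inner ℂ x (Matrix.toEuclideanLin A x) : ℂ) := continuous_id.inner hT
  have heq : DW A = (fun x : EuclideanSpace ℂ (Fin n) =>
      ((inner ℂ x (Matrix.toEuclideanLin A x) : ℂ).re,
       (inner ℂ x (Matrix.toEuclideanLin A x) : ℂ).im,
       ‖Matrix.toEuclideanLin A x‖ ^ 2)) '' (Metric.sphere 0 1) := by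
    ext v
    constructor
    · rintro ⟨x, hx, rfl⟩; exact ⟨x, by simpa using hx, rfl⟩
    · rintro ⟨x, hx, rfl⟩; exact ⟨x, by simpa using hx, rfl⟩
  rw [heq]
  exact (isCompact_sphere _ _).image
    (((Complex.continuous_re.comp hin)).prodMk
      ((Complex.continuous_im.comp hin).prodMk (hT.norm.pow 2)))

theorem stmt11 {n : ℕ} (A : Matrix (Fin n) (Fin n) ℂ) :
    ∀ z ∈ FN A, ∃ v ∈ frontier (DW A), 0 < v.2.2 ∧ z = hmap v := by
  rintro z ⟨x, hAx, rfl⟩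
  set T := Matrix.toEuclideanLin A with hTdef
  have hx : x ≠ 0 := fun h => hAx (by simp [h])
  have hxn : (0:ℝ) < ‖x‖ := norm_pos_iff.mpr hx
  set c : ℂ := (‖x‖ : ℂ)⁻¹ with hc
  set y : EuclideanSpace ℂ (Fin n) := c • x with hy
  have hcnorm : ‖c‖ = ‖x‖⁻¹ := by
    rw [hc, norm_inv, Complex.norm_real, Real.norm_eq_abs, abs_of_pos hxn]
  have hyn : ‖y‖ = 1 := by
    rw [hy, norm_smul, hcnorm, inv_mul_cancel₀ hxn.ne']
  have hTy : T y = c • T x := by rw [hy, LinearMap.map_smul]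
  set a : ℂ := (inner ℂ y (T y) : ℂ) with ha
  set r : ℝ := ‖T y‖ with hr
  have hrpos : (0:ℝ) < r := by
    rw [hr, hTy]
    refine norm_pos_iff.mpr (smul_ne_zero ?_ hAx)
    simp [hc, hxn.ne']
  -- z = a / r
  have hz : fN A x = a / (r : ℂ) := by
    have hconj : (starRingEnd ℂ) c = c := by
      rw [hc]; simp
    have hay : a = c * c * (inner ℂ x (T x) : ℂ) := by
      rw [ha, hTy, hy, inner_smul_left, inner_smul_right, hconj]; ring
    have hry : (r : ℝ) = ‖x‖⁻¹ * ‖T x‖ := by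
      rw [hr, hTy, norm_smul, hcnorm]
    have hTxn : (0:ℝ) < ‖T x‖ := norm_pos_iff.mpr hAx
    have hxc : (‖x‖:ℂ) ≠ 0 := by exact_mod_cast hxn.ne'
    have hTxc : (‖T x‖:ℂ) ≠ 0 := by exact_mod_cast hTxn.ne'
    rw [fN, ← hTdef, hay, hry, hc]
    push_cast
    field_simp
  -- the curve
  set γ : ℝ → ℝ × ℝ × ℝ := fun s => (s * a.re, s * a.im, s ^ 2 * r ^ 2) with hγ
  have hγcont : Continuous γ := by fun_prop
  have hγDW : γ 1 ∈ DW A := by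
    refine ⟨y, hyn, ?_⟩
    simp [hγ, ha, hr, hTdef]
  set S : Set ℝ := {s | 1 ≤ s ∧ γ s ∈ DW A} with hS
  have h1S : (1:ℝ) ∈ S := ⟨le_refl 1, hγDW⟩
  have hScl : IsClosed S := by
    have : S = Set.Ici 1 ∩ γ ⁻¹' (DW A) := rfl
    rw [this]
    exact isClosed_Ici.inter ((DW_compact A).isClosed.preimage hγcont)
  -- bounded above
  obtain ⟨C, hC⟩ : ∃ C, ∀ v ∈ DW A, v.2.2 ≤ C := by
    have hcomp : IsCompact ((fun v : ℝ × ℝ × ℝ => v.2.2) '' DW A) :=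
      (DW_compact A).image (by fun_prop)
    obtain ⟨C, hC⟩ := hcomp.bddAbove
    exact ⟨C, fun v hv => hC ⟨v, hv, rfl⟩⟩
  have hSbdd : BddAbove S := by
    refine ⟨C / r ^ 2, fun s hs => ?_⟩
    have h3 : s ^ 2 * r ^ 2 ≤ C := hC _ hs.2
    have hs1 : 1 ≤ s := hs.1
    have : s ≤ s ^ 2 := by nlinarith
    have hr2 : (0:ℝ) < r ^ 2 := by positivity
    rw [le_div_iff₀ hr2]
    nlinarith
  set s₀ : ℝ := sSup S with hs₀
  have hs₀S : s₀ ∈ S := hScl.csSup_mem ⟨1, h1S⟩ hSbdd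
  have hs₀1 : 1 ≤ s₀ := hs₀S.1
  refine ⟨γ s₀, ?_, ?_, ?_⟩
  · rw [frontier_eq_closure_inter_closure]
    constructor
    · exact subset_closure hs₀S.2
    · have h1 : s₀ ∈ closure (Set.Ioi s₀) := by
        rw [closure_Ioi]; exact Set.self_mem_Ici
      have h2 : γ s₀ ∈ closure (γ '' Set.Ioi s₀) :=
        (image_closure_subset_closure_image hγcont) ⟨s₀, h1, rfl⟩
      refine closure_mono ?_ h2
      rintro v ⟨s, hsIoi, rfl⟩
      intro hvDW
      have : s ∈ S := ⟨le_of_lt (lt_of_le_of_lt hs₀1 hsIoi), hvDW⟩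
      exact absurd (le_csSup hSbdd this) (not_le.mpr hsIoi)
  · have : (0:ℝ) < s₀ ^ 2 * r ^ 2 := by positivity
    exact this
  · rw [hz]
    show a / (r:ℂ) = hmap (γ s₀)
    have hs₀pos : (0:ℝ) < s₀ := lt_of_lt_of_le one_pos hs₀1
    have hsqrt : Real.sqrt (s₀ ^ 2 * r ^ 2) = s₀ * r := by
      rw [Real.sqrt_mul (sq_nonneg s₀), Real.sqrt_sq hs₀pos.le, Real.sqrt_sq hrpos.le]
    rw [hmap]
    simp only [hγ, hsqrt]
    push_cast
    rw [div_eq_div_iff]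
    · linear_combination (-(s₀:ℂ) * (r:ℂ)) * Complex.re_add_im a
    · exact_mod_cast hrpos.ne'
    · exact_mod_cast (mul_pos hs₀pos hrpos).ne'
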